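/- Let A be a complex-linear operator on a two-dimensional complex vector space V, symmetric with respect to a non-degenerate symmetric complex bilinear form g. Then there exists a g-orthonormal basis {e₁, e₂} of V with respect to which the matrix of A is either diagonal, diag(α, β), or of the form [[α+1, i],[i, α−1]] for some α, β ∈ ℂ. -/

import Mathlib

section Aux

variable {V : Type*} [AddCommGroup V] [Module ℂ V]

/-- From a g-orthonormal pair in a 2-dimensional space, build a basis. -/
lemma aux_ortho_basis (hdim : Module.finrank ℂ V = 2)
    (g : LinearMap.BilinForm ℂ V) (a b : V)
    (haa : g a a = 1) (hbb : g b b = 1) (hab : g a b = 0) (hba : g b a = 0) :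
    ∃ e : Module.Basis (Fin 2) ℂ V, e 0 = a ∧ e 1 = b ∧
      (∀ i j, g (e i) (e j) = if i = j then 1 else 0) := by
  have li : LinearIndependent ℂ ![a, b] := by
    rw [LinearIndependent.pair_iff]
    intro s t hst
    have h1 : g a (s • a + t • b) = s := by
      simp [map_add, map_smul, haa, hab]
    have h2 : g b (s • a + t • b) = t := by
      simp [map_add, map_smul, hbb, hba]
    rw [hst] at h1 h2
    simp at h1 h2
    exact ⟨h1.symm, h2.symm⟩
  have hcard : Fintype.card (Fin 2) = Module.finrank ℂ V := by simp [hdim]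
  refine ⟨basisOfLinearIndependentOfCardEqFinrank li hcard, ?_, ?_, ?_⟩
  · rw [coe_basisOfLinearIndependentOfCardEqFinrank]; rfl
  · rw [coe_basisOfLinearIndependentOfCardEqFinrank]; rfl
  · intro i j
    rw [coe_basisOfLinearIndependentOfCardEqFinrank]
    fin_cases i <;> fin_cases j <;> simp [haa, hbb, hab, hba]

end Aux

/-- Normal forms of a g-symmetric operator on a 2-dimensional holomorphic inner
product space. -/
theorem stmt_4 {V : Type*} [AddCommGroup V] [Module ℂ V] [FiniteDimensional ℂ V]
    (hdim : Module.finrank ℂ V = 2)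
    (g : LinearMap.BilinForm ℂ V)
    (hsymm : ∀ x y : V, g x y = g y x)
    (hnd : ∀ x : V, (∀ y : V, g x y = 0) → x = 0)
    (A : V →ₗ[ℂ] V)
    (hA : ∀ x y : V, g (A x) y = g x (A y)) :
    ∃ e : Module.Basis (Fin 2) ℂ V,
      (∀ i j, g (e i) (e j) = if i = j then 1 else 0) ∧
      ((∃ α β : ℂ, A (e 0) = α • e 0 ∧ A (e 1) = β • e 1) ∨
        (∃ α : ℂ, A (e 0) = (α + 1) • e 0 + Complex.I • e 1 ∧
          A (e 1) = Complex.I • e 0 + (α - 1) • e 1)) := by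
  have hpos : 0 < Module.finrank ℂ V := by rw [hdim]; norm_num
  have : Nontrivial V := Module.nontrivial_of_finrank_pos hpos
  -- eigenvector
  obtain ⟨α, hα⟩ := Module.End.exists_eigenvalue (A : Module.End ℂ V)
  obtain ⟨v, hv⟩ := hα.exists_hasEigenvector
  have hAv : A v = α • v := hv.apply_eq_smul
  have hv0 : v ≠ 0 := hv.right
  -- nondegeneracy helper
  have pairing : ∀ x : V, x ≠ 0 → ∃ y, g x y ≠ 0 := by
    intro x hx
    by_contra h
    push_neg at h
    exact hx (hnd x (by simpa using h))
  by_cases hvv : g v v = 0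
  · -- null eigenvector case: build hyperbolic pair (v, w)
    obtain ⟨u, hu⟩ := pairing v hv0
    set u' : V := (g v u)⁻¹ • u with hu'
    have hvu' : g v u' = 1 := by
      simp [hu', map_smul, smul_eq_mul]
      field_simp
    set w : V := u' - (g u' u' / 2) • v with hw
    have huv' : g u' v = 1 := by rw [hsymm]; exact hvu'
    have hvw : g v w = 1 := by
      simp [hw, map_sub, map_smul, smul_eq_mul, hvu', hvv]
    have hwv : g w v = 1 := by rw [hsymm]; exact hvw
    have hww : g w w = 0 := by
      simp only [hw, map_sub, map_smul, LinearMap.sub_apply, LinearMap.smul_apply,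
        smul_eq_mul, hvu', huv', hvv]
      ring
    clear hw hvu' huv' hu
    clear_value w
    clear hu' u'
    -- basis (v, w)
    have li : LinearIndependent ℂ ![v, w] := by
      rw [LinearIndependent.pair_iff]
      intro s t hst
      have h1 : g v (s • v + t • w) = t := by simp [map_add, map_smul, hvv, hvw]
      have h2 : g w (s • v + t • w) = s := by simp [map_add, map_smul, hww, hwv]
      rw [hst] at h1 h2
      simp at h1 h2
      exact ⟨h2.symm, h1.symm⟩
    have hcard : Fintype.card (Fin 2) = Module.finrank ℂ V := by simp [hdim]
    set b := basisOfLinearIndependentOfCardEqFinrank li hcard with hb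
    have hb0 : b 0 = v := by rw [hb, coe_basisOfLinearIndependentOfCardEqFinrank]; rfl
    have hb1 : b 1 = w := by rw [hb, coe_basisOfLinearIndependentOfCardEqFinrank]; rfl
    -- decompose A w
    have hdecomp : A w = (b.repr (A w) 0) • v + (b.repr (A w) 1) • w := by
      conv_lhs => rw [← b.sum_repr (A w)]
      rw [Fin.sum_univ_two, hb0, hb1]
    set μ : ℂ := b.repr (A w) 0 with hμ
    set ν : ℂ := b.repr (A w) 1 with hν
    have hνα : ν = α := by
      have h1 : g v (A w) = ν := by
        rw [hdecomp]
        simp [map_add, map_smul, hvv, hvw]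
      have h2 : g v (A w) = α := by
        rw [← hA, hAv]
        simp [map_smul, hvw]
      rw [h1] at h2; exact h2
    have hAw : A w = μ • v + α • w := by rw [hdecomp, hνα]
    -- square root of 1/2
    obtain ⟨r, hr⟩ := IsAlgClosed.exists_pow_nat_eq ((2 : ℂ)⁻¹) (n := 2) (by norm_num)
    have hr2 : r * r = 2⁻¹ := by rw [← hr]; ring
    by_cases hμ0 : μ = 0
    · -- A = α on span(v,w): diagonal case
      rw [hμ0, zero_smul, zero_add] at hAw
      set a : V := r • (v + w) with ha
      set c : V := (Complex.I * r) • (w - v) with hc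
      have haa : g a a = 1 := by
        simp only [ha, map_add, map_smul, LinearMap.add_apply, LinearMap.smul_apply,
          smul_eq_mul, hvv, hww, hvw, hwv]
        rw [show r * (r * (0 + 1) + r * (1 + 0)) = r * r * 2 by ring, hr2]
        norm_num
      have hcc : g c c = 1 := by
        simp only [hc, map_sub, map_smul, LinearMap.sub_apply, LinearMap.smul_apply,
          smul_eq_mul, hvv, hww, hvw, hwv]
        linear_combination (-2*r*r) * Complex.I_mul_I + 2 * hr2
      have hac : g a c = 0 := by
        simp only [ha, hc, map_add, map_sub, map_smul, LinearMap.add_apply, LinearMap.sub_apply,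
          LinearMap.smul_apply, smul_eq_mul, hvv, hww, hvw, hwv]
        ring
      have hca : g c a = 0 := by rw [hsymm]; exact hac
      obtain ⟨e, he0, he1, hON⟩ := aux_ortho_basis hdim g a c haa hcc hac hca
      refine ⟨e, hON, Or.inl ⟨α, α, ?_, ?_⟩⟩
      · rw [he0, ha, map_smul, map_add, hAv, hAw]
        module
      · rw [he1, hc, map_smul, map_sub, hAv, hAw]
        module
    · -- non-diagonalizable case
      obtain ⟨t, ht⟩ := IsAlgClosed.exists_pow_nat_eq (μ / 2) (n := 2) (by norm_num)
      have ht2 : t * t = μ / 2 := by rw [← ht]; ring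
      have ht0 : t ≠ 0 := by
        intro h; rw [h] at ht2; simp at ht2
        exact hμ0 (by linear_combination -2 * ht2)
      set f1 : V := t • v with hf1
      set f2 : V := t⁻¹ • w with hf2
      have hf11 : g f1 f1 = 0 := by simp [hf1, map_smul, smul_eq_mul, hvv]
      have hf22 : g f2 f2 = 0 := by simp [hf2, map_smul, smul_eq_mul, hww]
      have hf12 : g f1 f2 = 1 := by
        simp [hf1, hf2, map_smul, smul_eq_mul, hvw]
        field_simp
      have hf21 : g f2 f1 = 1 := by rw [hsymm]; exact hf12
      have hAf1 : A f1 = α • f1 := by rw [hf1, map_smul, hAv]; module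
      have hAf2 : A f2 = (2 : ℂ) • f1 + α • f2 := by
        rw [hf2, map_smul, hAw, hf1]
        rw [show (2:ℂ) • (t • v) = (2 * t) • v by module]
        have h2t : t⁻¹ * μ = 2 * t := by
          field_simp
          linear_combination -2 * ht2
        rw [show t⁻¹ • (μ • v + α • w) = (t⁻¹ * μ) • v + α • (t⁻¹ • w) by module, h2t]
      clear hf1 hf2 hdecomp hAw hAv
      clear_value f1 f2
      set a : V := r • (f1 + f2) with ha
      set c : V := (Complex.I * r) • (f2 - f1) with hc
      have haa : g a a = 1 := by
        simp only [ha, map_add, map_smul, LinearMap.add_apply, LinearMap.smul_apply,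
          smul_eq_mul, hf11, hf22, hf12, hf21]
        rw [show r * (r * (0 + 1) + r * (1 + 0)) = r * r * 2 by ring, hr2]
        norm_num
      have hcc : g c c = 1 := by
        simp only [hc, map_sub, map_smul, LinearMap.sub_apply, LinearMap.smul_apply,
          smul_eq_mul, hf11, hf22, hf12, hf21]
        linear_combination (-2*r*r) * Complex.I_mul_I + 2 * hr2
      have hac : g a c = 0 := by
        simp only [ha, hc, map_add, map_sub, map_smul, LinearMap.add_apply, LinearMap.sub_apply,
          LinearMap.smul_apply, smul_eq_mul, hf11, hf22, hf12, hf21]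
        ring
      have hca : g c a = 0 := by rw [hsymm]; exact hac
      obtain ⟨e, he0, he1, hON⟩ := aux_ortho_basis hdim g a c haa hcc hac hca
      refine ⟨e, hON, Or.inr ⟨α, ?_, ?_⟩⟩
      · rw [he0, he1, ha, hc, map_smul, map_add, hAf1, hAf2]
        match_scalars
        all_goals try ring
        all_goals try linear_combination r * Complex.I_mul_I
        all_goals linear_combination (-r) * Complex.I_mul_I
      · rw [he0, he1, ha, hc, map_smul, map_sub, hAf1, hAf2]
        match_scalars
        all_goals try ring
  · -- g v v ≠ 0 : diagonal case
    obtain ⟨t, ht⟩ := IsAlgClosed.exists_pow_nat_eq (g v v) (n := 2) (by norm_num)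
    have ht2 : t * t = g v v := by rw [← ht]; ring
    have ht0 : t ≠ 0 := by intro h; rw [h] at ht2; simp at ht2; exact hvv ht2.symm
    set a : V := t⁻¹ • v with ha
    have haa : g a a = 1 := by
      simp only [ha, map_smul, LinearMap.smul_apply, smul_eq_mul]
      field_simp
      linear_combination -ht2
    have hAa : A a = α • a := by rw [ha, map_smul, hAv]; module
    -- find w with g a w = 0, w ≠ 0
    have hker : ∃ w : V, w ≠ 0 ∧ g a w = 0 := by
      by_contra h
      push_neg at h
      -- then ker (g a) = 0, so g a is injective, so finrank ≤ 1, contradiction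
      have hinj : Function.Injective (g a) := by
        rw [← LinearMap.ker_eq_bot]
        rw [LinearMap.ker_eq_bot']
        intro m hm
        by_contra hm0
        exact (h m hm0) hm
      have : Module.finrank ℂ V ≤ Module.finrank ℂ ℂ :=
        LinearMap.finrank_le_finrank_of_injective hinj
      simp [hdim] at this
    obtain ⟨w, hw0, haw⟩ := hker
    have hwa : g w a = 0 := by rw [hsymm]; exact haw
    -- (a, w) is a basis
    have li : LinearIndependent ℂ ![a, w] := by
      rw [LinearIndependent.pair_iff]
      intro s u hsu
      have h1 : g a (s • a + u • w) = s := by simp [map_add, map_smul, haa, haw]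
      rw [hsu] at h1; simp at h1
      constructor
      · exact h1.symm
      · rw [← h1, zero_smul, zero_add] at hsu
        rcases smul_eq_zero.mp hsu with h | h
        · exact h
        · exact absurd h hw0
    have hcard : Fintype.card (Fin 2) = Module.finrank ℂ V := by simp [hdim]
    set b := basisOfLinearIndependentOfCardEqFinrank li hcard with hb
    have hb0 : b 0 = a := by rw [hb, coe_basisOfLinearIndependentOfCardEqFinrank]; rfl
    have hb1 : b 1 = w := by rw [hb, coe_basisOfLinearIndependentOfCardEqFinrank]; rfl
    -- g w w ≠ 0
    have hww : g w w ≠ 0 := by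
      intro hww0
      apply hw0
      apply hnd
      intro y
      have hy : y = (b.repr y 0) • a + (b.repr y 1) • w := by
        conv_lhs => rw [← b.sum_repr y]
        rw [Fin.sum_univ_two, hb0, hb1]
      rw [hy]
      simp [map_add, map_smul, hwa, hww0]
    obtain ⟨s, hs⟩ := IsAlgClosed.exists_pow_nat_eq (g w w) (n := 2) (by norm_num)
    have hs2 : s * s = g w w := by rw [← hs]; ring
    have hs0 : s ≠ 0 := by intro h; rw [h] at hs2; simp at hs2; exact hww hs2.symm
    set c : V := s⁻¹ • w with hc
    have hcc : g c c = 1 := by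
      simp only [hc, map_smul, LinearMap.smul_apply, smul_eq_mul]
      field_simp
      linear_combination -hs2
    have hacz : g a c = 0 := by simp [hc, map_smul, smul_eq_mul, haw]
    have hcaz : g c a = 0 := by rw [hsymm]; exact hacz
    -- A c is orthogonal to a, hence multiple of c
    have hgAc : g a (A c) = 0 := by
      rw [← hA, hAa]
      simp [map_smul, hacz]
    obtain ⟨e, he0, he1, hON⟩ := aux_ortho_basis hdim g a c haa hcc hacz hcaz
    have hcb : g c w = s := by
      simp only [hc, map_smul, LinearMap.smul_apply, smul_eq_mul]
      field_simp
      linear_combination -hs2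
    -- decompose A c in basis b = (a, w)
    have hdecomp : A c = (b.repr (A c) 0) • a + (b.repr (A c) 1) • w := by
      conv_lhs => rw [← b.sum_repr (A c)]
      rw [Fin.sum_univ_two, hb0, hb1]
    have hcoef0 : b.repr (A c) 0 = 0 := by
      have := hgAc
      rw [hdecomp] at this
      simpa [map_add, map_smul, haa, haw] using this
    obtain ⟨β, hβ⟩ : ∃ β : ℂ, b.repr (A c) 1 = β := ⟨_, rfl⟩
    rw [hβ] at hdecomp
    rw [hcoef0, zero_smul, zero_add] at hdecomp
    have hAc : A c = (β * s) • c := by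
      rw [hdecomp, hc, smul_smul]
      congr 1
      field_simp
    refine ⟨e, hON, Or.inl ⟨α, β * s, ?_, ?_⟩⟩
    · rw [he0]; exact hAa
    · rw [he1]; exact hAc
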